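/- (Heinz–Kato inequality for unitarily invariant norms.) Let A be an m×n complex matrix, let ‖·‖ be a unitarily invariant norm on the space of complex m×n matrices, let X be an m×m positive definite Hermitian matrix and Y an n×n positive definite Hermitian matrix. Then ‖√X · A · √Y‖² ≤ ‖A‖ · ‖X A Y‖, where √X and √Y denote the unique positive definite square roots of X and Y. -/

import Mathlib

open Matrix
open scoped ComplexOrder
open scoped MatrixOrder

/-- `N` is a unitarily invariant matrix norm on `m × n` complex matrices:
it is a norm and satisfies `N (U * A * V) = N A` for all unitary `U`, `V`. -/
structure IsUnitarilyInvariantNorm (m n : ℕ) (N : Matrix (Fin m) (Fin n) ℂ → ℝ) : Prop where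
  eq_zero_iff : ∀ A, N A = 0 ↔ A = 0
  smul : ∀ (c : ℂ) (A), N (c • A) = ‖c‖ * N A
  triangle : ∀ A B, N (A + B) ≤ N A + N B
  unitary_inv : ∀ (U : Matrix (Fin m) (Fin m) ℂ) (V : Matrix (Fin n) (Fin n) ℂ),
    U ∈ Matrix.unitaryGroup (Fin m) ℂ → V ∈ Matrix.unitaryGroup (Fin n) ℂ →
    ∀ A, N (U * A * V) = N A

namespace HKaux
variable {k : ℕ} {X : Matrix (Fin k) (Fin k) ℂ}

noncomputable def mpow (hX : X.PosDef) (z : ℂ) : Matrix (Fin k) (Fin k) ℂ :=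
  (hX.1.eigenvectorUnitary : Matrix (Fin k) (Fin k) ℂ) *
    diagonal (fun i => (hX.1.eigenvalues i : ℂ) ^ z) *
    (star hX.1.eigenvectorUnitary : Matrix (Fin k) (Fin k) ℂ)

lemma eig_pos (hX : X.PosDef) (i : Fin k) : (0:ℝ) < hX.1.eigenvalues i :=
  hX.eigenvalues_pos i

lemma eig_ne (hX : X.PosDef) (i : Fin k) : (hX.1.eigenvalues i : ℂ) ≠ 0 := by
  simpa using (eig_pos hX i).ne'

lemma key_cancel (hX : X.PosDef) (t : Matrix (Fin k) (Fin k) ℂ) :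
    (star hX.1.eigenvectorUnitary : Matrix (Fin k) (Fin k) ℂ) *
      ((hX.1.eigenvectorUnitary : Matrix (Fin k) (Fin k) ℂ) * t) = t := by
  rw [← mul_assoc, Unitary.coe_star_mul_self, one_mul]

lemma mpow_add (hX : X.PosDef) (z w : ℂ) :
    mpow hX (z + w) = mpow hX z * mpow hX w := by
  unfold mpow
  simp only [Matrix.mul_assoc, key_cancel hX]
  congr 1
  rw [← Matrix.mul_assoc, diagonal_mul_diagonal]
  have : (fun i => (hX.1.eigenvalues i : ℂ) ^ z * (hX.1.eigenvalues i : ℂ) ^ w)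
      = fun i => (hX.1.eigenvalues i : ℂ) ^ (z + w) :=
    funext fun i => (Complex.cpow_add _ _ (eig_ne hX i)).symm
  rw [this]

lemma mpow_one (hX : X.PosDef) : mpow hX 1 = X := by
  unfold mpow
  have : (fun i => (hX.1.eigenvalues i : ℂ) ^ (1:ℂ)) = (RCLike.ofReal ∘ hX.1.eigenvalues) := by
    funext i; simp [Complex.cpow_one]
  rw [this]
  conv_rhs => rw [hX.1.spectral_theorem, Unitary.conjStarAlgAut_apply]

lemma mpow_half_posSemidef (hX : X.PosDef) : (mpow hX (1/2)).PosSemidef := by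
  have h : mpow hX (1/2) =
      (hX.1.eigenvectorUnitary : Matrix (Fin k) (Fin k) ℂ) *
        diagonal (fun i => ((Real.sqrt (hX.1.eigenvalues i) : ℝ) : ℂ)) *
        (hX.1.eigenvectorUnitary : Matrix (Fin k) (Fin k) ℂ)ᴴ := by
    unfold mpow
    have : (fun i => (hX.1.eigenvalues i : ℂ) ^ ((1:ℂ)/2))
        = fun i => ((Real.sqrt (hX.1.eigenvalues i) : ℝ) : ℂ) := by
      funext i
      rw [Real.sqrt_eq_rpow, Complex.ofReal_cpow (eig_pos hX i).le]
      norm_num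
    rw [this]
    rfl
  rw [h]
  exact PosSemidef.mul_mul_conjTranspose_same
    (posSemidef_diagonal_iff.mpr fun i => by
      rw [RCLike.nonneg_iff]
      simp [Real.sqrt_nonneg]) _

lemma mpow_half (hX : X.PosDef) : mpow hX (1/2) = CFC.sqrt X := by
  refine (CFC.sqrt_unique ?_ (mpow_half_posSemidef hX).nonneg).symm
  rw [← mpow_add]
  norm_num [mpow_one]


lemma cpow_mul_conj (lam : ℝ) (hl : 0 < lam) {z : ℂ} (hz : z.re = 0) :
    ((lam:ℂ) ^ z) * (starRingEnd ℂ) ((lam:ℂ) ^ z) = 1 := by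
  have hne : (lam:ℂ) ≠ 0 := by simpa using hl.ne'
  rw [Complex.cpow_def_of_ne_zero hne]
  rw [← Complex.ofReal_log hl.le]
  rw [← Complex.exp_conj]
  rw [_root_.map_mul, Complex.conj_ofReal, ← Complex.exp_add, ← mul_add, Complex.add_conj, hz]
  norm_num

lemma mpow_mem_unitary (hX : X.PosDef) {z : ℂ} (hz : z.re = 0) :
    mpow hX z ∈ Matrix.unitaryGroup (Fin k) ℂ := by
  rw [Matrix.mem_unitaryGroup_iff]
  have hstar : star (mpow hX z) =
      (hX.1.eigenvectorUnitary : Matrix (Fin k) (Fin k) ℂ) *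
        diagonal (fun i => (starRingEnd ℂ) ((hX.1.eigenvalues i : ℂ) ^ z)) *
        (star hX.1.eigenvectorUnitary : Matrix (Fin k) (Fin k) ℂ) := by
    unfold mpow
    rw [StarMul.star_mul, StarMul.star_mul, star_star]
    rw [show star (diagonal fun i => (hX.1.eigenvalues i : ℂ) ^ z)
        = diagonal (fun i => (starRingEnd ℂ) ((hX.1.eigenvalues i : ℂ) ^ z)) by
      rw [Matrix.star_eq_conjTranspose, diagonal_conjTranspose]; rfl]
    rw [mul_assoc]
  rw [hstar]
  unfold mpow
  simp only [Matrix.mul_assoc, key_cancel hX]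
  rw [← Matrix.mul_assoc (diagonal _), diagonal_mul_diagonal]
  have : (fun i => (hX.1.eigenvalues i : ℂ) ^ z * (starRingEnd ℂ) ((hX.1.eigenvalues i : ℂ) ^ z))
      = fun _ => (1:ℂ) :=
    funext fun i => cpow_mul_conj _ (eig_pos hX i) hz
  rw [this]
  rw [show (diagonal (fun _ : Fin k => (1:ℂ)) : Matrix (Fin k) (Fin k) ℂ) = 1 from diagonal_one]
  rw [Matrix.one_mul]
  exact Unitary.coe_mul_star_self _


noncomputable def proj (hX : X.PosDef) (p : Fin k) : Matrix (Fin k) (Fin k) ℂ :=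
  (hX.1.eigenvectorUnitary : Matrix (Fin k) (Fin k) ℂ) * diagonal (Pi.single p 1) *
    (star hX.1.eigenvectorUnitary : Matrix (Fin k) (Fin k) ℂ)

lemma diagonal_eq_sum_single (d : Fin k → ℂ) :
    diagonal d = ∑ p, d p • diagonal (Pi.single p 1) := by
  ext i j
  rw [Matrix.sum_apply]
  by_cases h : i = j
  · subst h
    simp [diagonal_apply, Pi.single_apply]
  · simp [diagonal_apply_ne _ h, Pi.single_apply, h]

lemma mpow_repr (hX : X.PosDef) (z : ℂ) :
    mpow hX z = ∑ p, ((hX.1.eigenvalues p : ℂ) ^ z) • proj hX p := by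
  unfold mpow proj
  rw [diagonal_eq_sum_single]
  rw [Finset.mul_sum, Finset.sum_mul]
  congr 1
  funext p
  rw [mul_smul_comm, smul_mul_assoc]


lemma rpow_le_max {x t : ℝ} (hx : 0 < x) (h0 : 0 ≤ t) (h1 : t ≤ 1) :
    x ^ t ≤ max 1 x := by
  rcases le_total x 1 with h | h
  · exact le_max_of_le_left (Real.rpow_le_one hx.le h h0)
  · refine le_max_of_le_right ?_
    calc x ^ t ≤ x ^ (1:ℝ) := Real.rpow_le_rpow_of_exponent_le h h1
    _ = x := Real.rpow_one x

set_option maxHeartbeats 1000000 in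
lemma heinz_kato_aux {m n : ℕ} {E : Type} [NormedAddCommGroup E] [NormedSpace ℂ E]
    (L : Matrix (Fin m) (Fin n) ℂ →ₗ[ℂ] E)
    (hL : ∀ (U : Matrix (Fin m) (Fin m) ℂ) (V : Matrix (Fin n) (Fin n) ℂ),
      U ∈ Matrix.unitaryGroup (Fin m) ℂ → V ∈ Matrix.unitaryGroup (Fin n) ℂ →
      ∀ A, ‖L (U * A * V)‖ = ‖L A‖)
    (A : Matrix (Fin m) (Fin n) ℂ) {X : Matrix (Fin m) (Fin m) ℂ}
    {Y : Matrix (Fin n) (Fin n) ℂ} (hX : X.PosDef) (hY : Y.PosDef) :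
    ‖L (CFC.sqrt X * A * CFC.sqrt Y)‖ ^ 2 ≤ ‖L A‖ * ‖L (X * A * Y)‖ := by
  classical
  set lam := hX.1.eigenvalues
  set mu := hY.1.eigenvalues
  set f : ℂ → E := fun z => L (mpow hX z * A * mpow hY z) with hf
  -- sum representation
  have hrepr : ∀ z : ℂ, f z = ∑ p, ∑ q, ((lam p : ℂ) ^ z * (mu q : ℂ) ^ z) •
      L (proj hX p * A * proj hY q) := by
    intro z
    show L (mpow hX z * A * mpow hY z) = _
    have hmat : mpow hX z * A * mpow hY z =
        ∑ p, ∑ q, ((lam p : ℂ) ^ z * (mu q : ℂ) ^ z) • (proj hX p * A * proj hY q) := by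
      rw [mpow_repr hX z, mpow_repr hY z]
      rw [Matrix.sum_mul, Matrix.sum_mul]
      simp only [Matrix.smul_mul, Matrix.mul_sum, Matrix.mul_smul, smul_smul]
      exact Finset.sum_congr rfl fun p _ => Finset.sum_congr rfl fun q _ => by rw [mul_comm]
    rw [hmat, map_sum]
    simp only [map_sum, LinearMap.map_smul]
  -- differentiable
  have hd : Differentiable ℂ f := by
    have : f = fun z => ∑ p, ∑ q, ((lam p : ℂ) ^ z * (mu q : ℂ) ^ z) •
        L (proj hX p * A * proj hY q) := funext hrepr
    rw [this]
    apply Differentiable.fun_sum; intro p _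
    apply Differentiable.fun_sum; intro q _
    exact ((differentiable_id.const_cpow (Or.inl (eig_ne hX p))).mul
      (differentiable_id.const_cpow (Or.inl (eig_ne hY q)))).smul_const _
  -- bounded on closed strip
  have hBdd : BddAbove ((norm ∘ f) '' Complex.HadamardThreeLines.verticalClosedStrip 0 1) := by
    refine ⟨∑ p, ∑ q, (max 1 (lam p) * max 1 (mu q)) * ‖L (proj hX p * A * proj hY q)‖, ?_⟩
    rintro r ⟨z, hz, rfl⟩
    simp only [Function.comp_apply]
    rw [hrepr z]
    refine (norm_sum_le _ _).trans (Finset.sum_le_sum fun p _ => ?_)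
    refine (norm_sum_le _ _).trans (Finset.sum_le_sum fun q _ => ?_)
    rw [norm_smul]
    apply mul_le_mul_of_nonneg_right _ (norm_nonneg _)
    have hz0 : 0 ≤ z.re := hz.1
    have hz1 : z.re ≤ 1 := hz.2
    rw [norm_mul,
      Complex.norm_cpow_eq_rpow_re_of_pos (eig_pos hX p) z,
      Complex.norm_cpow_eq_rpow_re_of_pos (eig_pos hY q) z]
    exact mul_le_mul (rpow_le_max (eig_pos hX p) hz0 hz1) (rpow_le_max (eig_pos hY q) hz0 hz1)
      (Real.rpow_nonneg (eig_pos hY q).le _) (le_trans zero_le_one (le_max_left _ _))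
  -- edge bounds
  have ha : ∀ z : ℂ, z ∈ Complex.re ⁻¹' {0} → ‖f z‖ ≤ ‖L A‖ := by
    intro z hz
    have hz' : z.re = 0 := hz
    exact le_of_eq (hL _ _ (mpow_mem_unitary hX hz') (mpow_mem_unitary hY hz') A)
  have hb : ∀ z : ℂ, z ∈ Complex.re ⁻¹' {1} → ‖f z‖ ≤ ‖L (X * A * Y)‖ := by
    intro z hz
    have hz' : (z - 1).re = 0 := by
      have : z.re = 1 := hz
      simp [Complex.sub_re, this]
    have heq : f z = L (mpow hX (z-1) * (X * A * Y) * mpow hY (z-1)) := by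
      show L (mpow hX z * A * mpow hY z) = _
      have h1 : mpow hX z = mpow hX (z-1) * mpow hX 1 := by
        rw [← mpow_add]; congr 1; ring
      have h2 : mpow hY z = mpow hY 1 * mpow hY (z-1) := by
        rw [← mpow_add]; congr 1; ring
      have hmx : mpow hX z * A * mpow hY z
          = mpow hX (z-1) * (X * A * Y) * mpow hY (z-1) := by
        rw [h1, h2, mpow_one, mpow_one]
        simp only [Matrix.mul_assoc]
      rw [hmx]
    rw [heq]
    exact le_of_eq (hL _ _ (mpow_mem_unitary hX hz') (mpow_mem_unitary hY hz') _)
  -- Hadamard three lines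
  have hhalfre : ((1:ℂ)/2).re = 1/2 := by
    rw [show ((1:ℂ)/2) = ((1/2:ℝ):ℂ) by norm_num, Complex.ofReal_re]
  have hmem : ((1:ℂ)/2) ∈ Complex.HadamardThreeLines.verticalClosedStrip 0 1 := by
    simp only [Complex.HadamardThreeLines.verticalClosedStrip, Set.mem_preimage, Set.mem_Icc,
      hhalfre]
    norm_num
  have main := Complex.HadamardThreeLines.norm_le_interp_of_mem_verticalClosedStrip' (f := f) zero_lt_one hmem
    hd.diffContOnCl hBdd ha hb
  rw [hhalfre] at main
  have hhalf : f (1/2) = L (CFC.sqrt X * A * CFC.sqrt Y) := by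
    show L (mpow hX (1/2) * A * mpow hY (1/2)) = _
    rw [mpow_half hX, mpow_half hY]
  rw [hhalf] at main
  have h2' : ((1:ℝ)/2 - 0) / (1 - 0) = 1/2 := by norm_num
  rw [h2'] at main
  have h2 : (1:ℝ) - 1/2 = 1/2 := by norm_num
  rw [h2] at main
  have ha0 : (0:ℝ) ≤ ‖L A‖ := norm_nonneg _
  have hb0 : (0:ℝ) ≤ ‖L (X * A * Y)‖ := norm_nonneg _
  calc ‖L (CFC.sqrt X * A * CFC.sqrt Y)‖ ^ 2
      ≤ (‖L A‖ ^ ((1:ℝ)/2) * ‖L (X * A * Y)‖ ^ ((1:ℝ)/2)) ^ 2 :=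
        pow_le_pow_left₀ (norm_nonneg _) main 2
    _ = ‖L A‖ * ‖L (X * A * Y)‖ := by
        rw [mul_pow, ← Real.rpow_natCast (‖L A‖ ^ ((1:ℝ)/2)) 2,
          ← Real.rpow_natCast (‖L (X * A * Y)‖ ^ ((1:ℝ)/2)) 2,
          ← Real.rpow_mul ha0, ← Real.rpow_mul hb0]
        norm_num


/-- Type synonym on which we install the norm `N`. -/
def HKE (m n : ℕ) : Type := Matrix (Fin m) (Fin n) ℂ

end HKaux

/-- **Heinz–Kato inequality** for unitarily invariant norms:
`‖√X · A · √Y‖² ≤ ‖A‖ · ‖X A Y‖` for positive definite `X`, `Y`,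
where `√X`, `√Y` are the positive (semi)definite square roots. -/
theorem heinz_kato (m n : ℕ) (A : Matrix (Fin m) (Fin n) ℂ)
    (N : Matrix (Fin m) (Fin n) ℂ → ℝ) (hN : IsUnitarilyInvariantNorm m n N)
    (X : Matrix (Fin m) (Fin m) ℂ) (Y : Matrix (Fin n) (Fin n) ℂ)
    (hX : X.PosDef) (hY : Y.PosDef) :
    N (CFC.sqrt X * A * CFC.sqrt Y) ^ 2 ≤ N A * N (X * A * Y) := by
  letI : AddCommGroup (HKaux.HKE m n) :=
    inferInstanceAs (AddCommGroup (Matrix (Fin m) (Fin n) ℂ))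
  letI : Module ℂ (HKaux.HKE m n) :=
    inferInstanceAs (Module ℂ (Matrix (Fin m) (Fin n) ℂ))
  letI : NormedAddCommGroup (HKaux.HKE m n) :=
    AddGroupNorm.toNormedAddCommGroup
      { toFun := N
        map_zero' := by exact (by simpa using hN.smul 0 0 : N (0 : Matrix (Fin m) (Fin n) ℂ) = 0)
        add_le' := hN.triangle
        neg' := fun A => by
          have h : ∀ B : Matrix (Fin m) (Fin n) ℂ, N (-B) = N B := fun B => by simpa using hN.smul (-1) B
          exact h A
        eq_zero_of_map_eq_zero' := fun A h => (hN.eq_zero_iff A).1 h }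
  letI : NormedSpace ℂ (HKaux.HKE m n) := ⟨fun c x => le_of_eq (hN.smul c x)⟩
  let L : Matrix (Fin m) (Fin n) ℂ →ₗ[ℂ] HKaux.HKE m n :=
    { toFun := fun M => M
      map_add' := fun _ _ => rfl
      map_smul' := fun _ _ => rfl }
  have hL : ∀ (U : Matrix (Fin m) (Fin m) ℂ) (V : Matrix (Fin n) (Fin n) ℂ),
      U ∈ Matrix.unitaryGroup (Fin m) ℂ → V ∈ Matrix.unitaryGroup (Fin n) ℂ →
      ∀ B, ‖L (U * B * V)‖ = ‖L B‖ := fun U V hU hV B => hN.unitary_inv U V hU hV B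
  exact HKaux.heinz_kato_aux L hL A hX hY
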